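/- There exists n₀ ∈ ℕ such that the following holds: if G is a finite abelian group of order n ≥ n₀, H is a subgroup of G of index 2, B = G \ H, and S ⊆ H is a sum-free set with |S| ≥ 10⁴, then the number of maximal independent sets of the link graph L_S[B] is at most 2^{0.24·n}. -/

import Mathlib

open Pointwise

/-- A subset `A` of an additive group is *sum-free* if there are no
`x, y, z ∈ A` (not necessarily distinct) with `x + y = z`. -/
def IsSumFree {G : Type*} [AddCommGroup G] (A : Set G) : Prop :=
  ∀ x ∈ A, ∀ y ∈ A, x + y ∉ A

/-- `I` is an independent set of the link graph `L_S[B]`: a subset of `B` containing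
no looped vertex (a vertex `x` with `x + x ∈ S` or `x ∈ (S + S) ∪ (S - S)`) and no
pair of distinct adjacent vertices (`x, y` with `x + y ∈ S` or `x - y ∈ S ∪ (−S)`). -/
def LinkIndep {G : Type*} [AddCommGroup G] (S B I : Set G) : Prop :=
  I ⊆ B ∧ (∀ x ∈ I, ¬(x + x ∈ S ∨ x ∈ (S + S) ∪ (S - S))) ∧
    ∀ x ∈ I, ∀ y ∈ I, x ≠ y → ¬(x + y ∈ S ∨ x - y ∈ S ∪ -S)

/-- The number of maximal independent sets of the link graph `L_S[B]`. -/
noncomputable def linkMIS {G : Type*} [AddCommGroup G] (S B : Set G) : ℕ :=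
  Nat.card {I : Set G // LinkIndep S B I ∧
    ∀ J : Set G, LinkIndep S B J → I ⊆ J → I = J}

attribute [local instance] Classical.propDecidable

namespace MISCount

open Finset

variable {α : Type*} [DecidableEq α]

/-- independence for a finset w.r.t. an adjacency relation -/
def Ind (adj : α → α → Prop) (I : Finset α) : Prop :=
  ∀ x ∈ I, ∀ y ∈ I, x ≠ y → ¬ adj x y

/-- maximal independent subsets of `W` -/
def MaxInd (adj : α → α → Prop) (W I : Finset α) : Prop :=
  I ⊆ W ∧ Ind adj I ∧ ∀ J : Finset α, J ⊆ W → Ind adj J → I ⊆ J → I = J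

noncomputable def mis (adj : α → α → Prop) (W : Finset α) : Finset (Finset α) :=
  W.powerset.filter (fun I => MaxInd adj W I)

noncomputable def nbhdC (adj : α → α → Prop) (W : Finset α) (v : α) : Finset α :=
  insert v (W.filter (fun u => adj v u))

noncomputable def inn (adj : α → α → Prop) (W : Finset α) (v : α) : ℕ :=
  (W.filter (fun u => adj v u)).card

variable {adj : α → α → Prop}

lemma mem_mis {W I : Finset α} : I ∈ mis adj W ↔ MaxInd adj W I := by
  unfold mis
  simp only [mem_filter, mem_powerset]
  exact ⟨fun h => h.2, fun h => ⟨h.1, h⟩⟩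

lemma ind_subset {I J : Finset α} (h : I ⊆ J) (hJ : Ind adj J) : Ind adj I :=
  fun x hx y hy hxy => hJ x (h hx) y (h hy) hxy

lemma nbhdC_subset {W : Finset α} {v : α} (hv : v ∈ W) : nbhdC adj W v ⊆ W :=
  insert_subset hv (filter_subset _ _)

lemma card_nbhdC (hirr : ∀ x, ¬ adj x x) (W : Finset α) (v : α) :
    (nbhdC adj W v).card = inn adj W v + 1 := by
  unfold nbhdC inn
  rw [card_insert_of_notMem]
  intro h
  exact hirr v (mem_filter.mp h).2

lemma mis_card_empty : (mis adj (∅ : Finset α)).card ≤ 1 := by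
  have : mis adj (∅ : Finset α) ⊆ {∅} := by
    intro I hI
    rw [mem_mis] at hI
    simp [subset_empty.mp hI.1]
  simpa using card_le_card this

/-- erasing a chosen member of a MIS gives a MIS of the graph minus the closed
neighbourhood -/
lemma erase_mem_mis (hsym : ∀ x y, adj x y → adj y x)
    {W I : Finset α} {u : α} (huW : u ∈ W) (hI : I ∈ mis adj W) (huI : u ∈ I) :
    I.erase u ∈ mis adj (W \ nbhdC adj W u) := by
  rw [mem_mis] at hI ⊢
  obtain ⟨hIW, hInd, hmax⟩ := hI
  have huN : u ∈ nbhdC adj W u := mem_insert_self _ _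
  refine ⟨?_, ind_subset (erase_subset _ _) hInd, ?_⟩
  · intro x hx
    have hxI : x ∈ I := mem_of_mem_erase hx
    have hxu : x ≠ u := ne_of_mem_erase hx
    rw [mem_sdiff]
    refine ⟨hIW hxI, ?_⟩
    intro hxN
    rcases mem_insert.mp hxN with h | h
    · exact hxu h
    · exact hInd u huI x hxI (Ne.symm hxu) (mem_filter.mp h).2
  · intro J hJW hJInd hIJ
    have hJW' : J ⊆ W := hJW.trans (sdiff_subset)
    have huJ : u ∉ J := by
      intro huJ
      have := (mem_sdiff.mp (hJW huJ)).2
      exact this huN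
    have hJind' : Ind adj (insert u J) := by
      intro x hx y hy hxy
      rcases mem_insert.mp hx with rfl | hxJ
      · rcases mem_insert.mp hy with rfl | hyJ
        · exact absurd rfl hxy
        · intro hadj
          have hyW : y ∈ W := hJW' hyJ
          have : y ∈ nbhdC adj W x := mem_insert_of_mem (mem_filter.mpr ⟨hyW, hadj⟩)
          exact (mem_sdiff.mp (hJW hyJ)).2 this
      · rcases mem_insert.mp hy with rfl | hyJ
        · intro hadj
          have hxW : x ∈ W := hJW' hxJ
          have : x ∈ nbhdC adj W y := mem_insert_of_mem (mem_filter.mpr ⟨hxW, hsym x y hadj⟩)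
          exact (mem_sdiff.mp (hJW hxJ)).2 this
        · exact hJInd x hxJ y hyJ hxy
    have hIiJ : I ⊆ insert u J := by
      intro x hxI
      by_cases hxu : x = u
      · exact hxu ▸ mem_insert_self _ _
      · exact mem_insert_of_mem (hIJ (mem_erase.mpr ⟨hxu, hxI⟩))
    have hIeq : I = insert u J :=
      hmax (insert u J) (insert_subset huW hJW') hJind' hIiJ
    rw [hIeq, erase_insert huJ]

lemma card_bucket_le (hsym : ∀ x y, adj x y → adj y x)
    {W : Finset α} {u : α} (huW : u ∈ W) :
    ((mis adj W).filter (fun I => u ∈ I)).card ≤ (mis adj (W \ nbhdC adj W u)).card := by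
  apply card_le_card_of_injOn (fun I => I.erase u)
  · intro I hI
    have h := mem_filter.mp hI
    exact erase_mem_mis hsym huW h.1 h.2
  · intro I₁ h₁ I₂ h₂ h
    have h₁' := mem_filter.mp (mem_coe.mp h₁)
    have h₂' := mem_filter.mp (mem_coe.mp h₂)
    have h' : insert u (I₁.erase u) = insert u (I₂.erase u) := congrArg (insert u) h
    rwa [insert_erase h₁'.2, insert_erase h₂'.2] at h' 

/-- two-way branching -/
lemma branch2 (hsym : ∀ x y, adj x y → adj y x)
    {W : Finset α} {v : α} (hvW : v ∈ W) :
    (mis adj W).card ≤ (mis adj (W \ {v})).card + (mis adj (W \ nbhdC adj W v)).card := by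
  have hsplit := card_filter_add_card_filter_not (s := mis adj W)
      (p := fun I => v ∈ I)
  have h1 : ((mis adj W).filter (fun I => ¬ v ∈ I)).card ≤ (mis adj (W \ {v})).card := by
    apply card_le_card_of_injOn (fun I => I)
    · intro I hI
      have h := mem_filter.mp hI
      have hvI : v ∉ I := h.2
      have h' := mem_mis.mp h.1
      obtain ⟨hIW, hInd, hmax⟩ := h'
      rw [mem_coe, mem_mis]
      refine ⟨?_, hInd, ?_⟩
      · intro x hx
        rw [mem_sdiff, mem_singleton]
        exact ⟨hIW hx, fun hxv => hvI (hxv ▸ hx)⟩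
      · intro J hJW hJInd hIJ
        exact hmax J (hJW.trans (sdiff_subset)) hJInd hIJ
    · intro I₁ _ I₂ _ h
      exact h
  have h2 : ((mis adj W).filter (fun I => v ∈ I)).card ≤
      (mis adj (W \ nbhdC adj W v)).card := card_bucket_le hsym hvW
  omega

/-- every MIS meets every closed neighbourhood -/
lemma exists_mem_nbhdC (hsym : ∀ x y, adj x y → adj y x)
    {W I : Finset α} {v : α} (hvW : v ∈ W) (hI : I ∈ mis adj W) :
    ∃ u ∈ nbhdC adj W v, u ∈ I := by
  by_contra h
  push_neg at h
  rw [mem_mis] at hI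
  obtain ⟨hIW, hInd, hmax⟩ := hI
  have hvI : v ∉ I := h v (mem_insert_self _ _)
  have hind : Ind adj (insert v I) := by
    intro x hx y hy hxy
    rcases mem_insert.mp hx with rfl | hxI
    · rcases mem_insert.mp hy with rfl | hyI
      · exact absurd rfl hxy
      · intro hadj
        exact h y (mem_insert_of_mem (mem_filter.mpr ⟨hIW hyI, hadj⟩)) hyI
    · rcases mem_insert.mp hy with rfl | hyI
      · intro hadj
        exact h x (mem_insert_of_mem (mem_filter.mpr ⟨hIW hxI, hsym x y hadj⟩)) hxI
      · exact hInd x hxI y hyI hxy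
  have : I = insert v I := hmax _ (insert_subset hvW hIW) hind (subset_insert _ _)
  exact hvI (this ▸ mem_insert_self v I)

/-- k-way branching over a closed neighbourhood -/
lemma branchK (hsym : ∀ x y, adj x y → adj y x)
    {W : Finset α} {v : α} (hvW : v ∈ W) :
    (mis adj W).card ≤
      ∑ u ∈ nbhdC adj W v, (mis adj (W \ nbhdC adj W u)).card := by
  have hcover : mis adj W ⊆
      (nbhdC adj W v).biUnion (fun u => (mis adj W).filter (fun I => u ∈ I)) := by
    intro I hI
    obtain ⟨u, huN, huI⟩ := exists_mem_nbhdC hsym hvW hI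
    exact mem_biUnion.mpr ⟨u, huN, mem_filter.mpr ⟨hI, huI⟩⟩
  calc (mis adj W).card ≤ _ := card_le_card hcover
    _ ≤ ∑ u ∈ nbhdC adj W v, ((mis adj W).filter (fun I => u ∈ I)).card :=
        card_biUnion_le
    _ ≤ ∑ u ∈ nbhdC adj W v, (mis adj (W \ nbhdC adj W u)).card := by
        apply sum_le_sum
        intro u hu
        exact card_bucket_le hsym (nbhdC_subset hvW hu)

/-- double counting of edges between two finsets -/
lemma sum_filter_card_comm (hsym : ∀ x y, adj x y → adj y x) (A C : Finset α) :
    ∑ a ∈ A, (C.filter (fun u => adj a u)).card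
      = ∑ c ∈ C, (A.filter (fun u => adj c u)).card := by
  simp only [card_filter]
  rw [sum_comm]
  apply sum_congr rfl
  intro c _
  apply sum_congr rfl
  intro a _
  exact if_congr ⟨fun h => hsym a c h, fun h => hsym c a h⟩ rfl rfl


lemma rpow_pow_eq (b q : ℝ) (hb : 0 ≤ b) (n : ℕ) : (b ^ q) ^ n = b ^ (q * n) := by
  rw [← Real.rpow_natCast (b ^ q) n, ← Real.rpow_mul hb]

lemma num1 : (2:ℝ) ^ (-(48/100) : ℝ) ≤ 72/100 := by
  apply le_of_pow_le_pow_left₀ (n := 25) (by norm_num) (by norm_num)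
  rw [rpow_pow_eq 2 _ (by norm_num)]
  rw [show (-(48/100) : ℝ) * (25:ℕ) = ((-12 : ℤ) : ℝ) by push_cast; norm_num]
  rw [Real.rpow_intCast]
  norm_num

lemma num2 : (2:ℝ) ^ (-(198/100) : ℝ) ≤ 28/100 := by
  apply le_of_pow_le_pow_left₀ (n := 50) (by norm_num) (by norm_num)
  rw [rpow_pow_eq 2 _ (by norm_num)]
  rw [show (-(198/100) : ℝ) * (50:ℕ) = ((-99 : ℤ) : ℝ) by push_cast; norm_num]
  rw [Real.rpow_intCast]
  norm_num

lemma num3 : (2:ℝ) ^ (-(33/100) : ℝ) ≤ 15/16 := by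
  apply le_of_pow_le_pow_left₀ (n := 100) (by norm_num) (by norm_num)
  rw [rpow_pow_eq 2 _ (by norm_num)]
  rw [show (-(33/100) : ℝ) * (100:ℕ) = ((-33 : ℤ) : ℝ) by push_cast; norm_num]
  rw [Real.rpow_intCast]
  norm_num

lemma num4 : (2:ℝ) ^ (-(4:ℝ)) ≤ 1/16 := by
  rw [show (-(4:ℝ)) = ((-4 : ℤ) : ℝ) by norm_num, Real.rpow_intCast]
  norm_num

lemma mm1 : (3:ℝ) ^ (-(1/3) : ℝ) + (3:ℝ) ^ (-(4/3) : ℝ) ≤ 1 := by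
  have h1 : (3:ℝ) ^ (-(1/3) : ℝ) ≤ 3/4 := by
    apply le_of_pow_le_pow_left₀ (n := 3) (by norm_num) (by norm_num)
    rw [rpow_pow_eq 3 _ (by norm_num)]
    rw [show (-(1/3) : ℝ) * (3:ℕ) = ((-1 : ℤ) : ℝ) by push_cast; norm_num]
    rw [Real.rpow_intCast]
    norm_num
  have h2 : (3:ℝ) ^ (-(4/3) : ℝ) = (3:ℝ) ^ (-(1/3) : ℝ) * (3:ℝ) ^ (-(1:ℝ)) := by
    rw [← Real.rpow_add (by norm_num)]; norm_num
  have h3 : (3:ℝ) ^ (-(1:ℝ)) = 1/3 := by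
    rw [show (-(1:ℝ)) = ((-1 : ℤ) : ℝ) by norm_num, Real.rpow_intCast]; norm_num
  have h0 : (0:ℝ) ≤ (3:ℝ) ^ (-(1/3) : ℝ) := le_of_lt (Real.rpow_pos_of_pos (by norm_num) _)
  rw [h2, h3]
  nlinarith

lemma mm2 : 2 * (3:ℝ) ^ (-(2/3) : ℝ) ≤ 1 := by
  have h1 : (3:ℝ) ^ (-(2/3) : ℝ) ≤ 1/2 := by
    apply le_of_pow_le_pow_left₀ (n := 3) (by norm_num) (by norm_num)
    rw [rpow_pow_eq 3 _ (by norm_num)]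
    rw [show (-(2/3) : ℝ) * (3:ℕ) = ((-2 : ℤ) : ℝ) by push_cast; norm_num]
    rw [Real.rpow_intCast]
    norm_num
  linarith

lemma numbase : (3:ℝ) ^ ((1/3) : ℝ) ≤ (2:ℝ) ^ ((529/1000) : ℝ) := by
  apply le_of_pow_le_pow_left₀ (n := 3000) (by norm_num) (by positivity)
  rw [rpow_pow_eq 3 _ (by norm_num), rpow_pow_eq 2 _ (by norm_num)]
  rw [show ((1/3) : ℝ) * (3000:ℕ) = ((1000:ℕ) : ℝ) by push_cast; norm_num]
  rw [show ((529/1000) : ℝ) * (3000:ℕ) = ((1587:ℕ) : ℝ) by push_cast; norm_num]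
  rw [Real.rpow_natCast, Real.rpow_natCast]
  have h : (3:ℕ)^1000 ≤ 2^1587 := by
    set_option maxRecDepth 100000 in exact Nat.le_of_ble_eq_true rfl
  exact_mod_cast h



noncomputable def outn (adj : α → α → Prop) (Ω W : Finset α) (v : α) : ℕ :=
  ((Ω \ W).filter (fun u => adj v u)).card

noncomputable def phi (adj : α → α → Prop) (Ω : Finset α) (D : ℕ) (W : Finset α) : ℝ :=
  ∑ v ∈ W, (48/100 + (1/(20*(D:ℝ))) * (outn adj Ω W v : ℝ))


lemma inn_mono {W V : Finset α} (h : W ⊆ V) (v : α) : inn adj W v ≤ inn adj V v :=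
  card_le_card (filter_subset_filter _ h)

lemma sum_outn_comm (hsym : ∀ x y, adj x y → adj y x) (Ω W : Finset α) :
    ∑ v ∈ W, outn adj Ω W v = ∑ y ∈ Ω \ W, inn adj W y := by
  unfold outn inn
  exact sum_filter_card_comm hsym W (Ω \ W)

lemma rpow3_neg_one : (3:ℝ) ^ (-(1:ℝ)) = 1/3 := by
  rw [show (-(1:ℝ)) = ((-1 : ℤ) : ℝ) by norm_num, Real.rpow_intCast]; norm_num

lemma rpow_div3_le {a b : ℝ} (h : a ≤ b) : (3:ℝ) ^ (a/3) ≤ (3:ℝ) ^ (b/3) :=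
  Real.rpow_le_rpow_of_exponent_le (by norm_num) (by linarith)

theorem moon_moser (hsym : ∀ x y, adj x y → adj y x) (hirr : ∀ x, ¬ adj x x) :
    ∀ (m : ℕ) (W : Finset α), W.card ≤ m →
      ((mis adj W).card : ℝ) ≤ 3 ^ ((W.card : ℝ) / 3) := by
  intro m
  induction m with
  | zero =>
      intro W hW
      have hWe : W = ∅ := card_eq_zero.mp (Nat.le_zero.mp hW)
      subst hWe
      simp only [card_empty, Nat.cast_zero, zero_div, Real.rpow_zero]
      exact_mod_cast mis_card_empty
  | succ m ih =>
      intro W hW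
      by_cases hWe : W = ∅
      · subst hWe
        simp only [card_empty, Nat.cast_zero, zero_div, Real.rpow_zero]
        exact_mod_cast mis_card_empty
      have htpos : (0:ℝ) < 3 ^ ((W.card : ℝ)/3) := Real.rpow_pos_of_pos (by norm_num) _
      by_cases hb3 : ∃ v ∈ W, 3 ≤ inn adj W v
      · obtain ⟨v, hvW, hv3⟩ := hb3
        have hNsub : nbhdC adj W v ⊆ W := nbhdC_subset hvW
        have hcN : (nbhdC adj W v).card = inn adj W v + 1 := card_nbhdC hirr W v
        have hc1 : (W \ {v}).card + 1 = W.card := by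
          have h := card_sdiff_add_card_eq_card (singleton_subset_iff.mpr hvW)
          simpa using h
        have hc2 : (W \ nbhdC adj W v).card + (inn adj W v + 1) = W.card := by
          have h := card_sdiff_add_card_eq_card hNsub
          omega
        have i1 := ih (W \ {v}) (by omega)
        have i2 := ih (W \ nbhdC adj W v) (by omega)
        have e1 : ((W \ {v}).card : ℝ) ≤ (W.card : ℝ) - 1 := by
          have : ((W \ {v}).card : ℝ) + 1 = (W.card : ℝ) := by exact_mod_cast hc1
          linarith
        have e2 : ((W \ nbhdC adj W v).card : ℝ) ≤ (W.card : ℝ) - 4 := by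
          have h4 : (W \ nbhdC adj W v).card + 4 ≤ W.card := by omega
          have : ((W \ nbhdC adj W v).card : ℝ) + 4 ≤ (W.card : ℝ) := by exact_mod_cast h4
          linarith
        calc ((mis adj W).card : ℝ)
            ≤ ((mis adj (W \ {v})).card : ℝ) + ((mis adj (W \ nbhdC adj W v)).card : ℝ) := by
              exact_mod_cast branch2 hsym hvW
          _ ≤ 3 ^ (((W.card:ℝ) - 1)/3) + 3 ^ (((W.card:ℝ) - 4)/3) :=
              add_le_add (i1.trans (rpow_div3_le e1)) (i2.trans (rpow_div3_le e2))
          _ ≤ 3 ^ ((W.card:ℝ)/3) := by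
              rw [show ((W.card:ℝ) - 1)/3 = (W.card:ℝ)/3 + (-(1/3)) by ring,
                  show ((W.card:ℝ) - 4)/3 = (W.card:ℝ)/3 + (-(4/3)) by ring,
                  Real.rpow_add (by norm_num), Real.rpow_add (by norm_num), ← mul_add]
              nlinarith [mm1, htpos.le, htpos]
      · push_neg at hb3
        by_cases h0 : ∃ v ∈ W, inn adj W v = 0
        · obtain ⟨v, hvW, hv0⟩ := h0
          have hN : nbhdC adj W v = {v} := by
            unfold nbhdC
            have hf : W.filter (fun u => adj v u) = ∅ := card_eq_zero.mp hv0
            rw [hf]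
            rfl
          have h9 := branchK hsym hvW
          rw [hN, sum_singleton, hN] at h9
          have hc1 : (W \ {v}).card + 1 = W.card := by
            have h := card_sdiff_add_card_eq_card (singleton_subset_iff.mpr hvW)
            simpa using h
          have i1 := ih (W \ {v}) (by omega)
          have e1 : ((W \ {v}).card : ℝ) ≤ (W.card : ℝ) := by
            have h5 : (W \ {v}).card ≤ W.card := by omega
            exact_mod_cast h5
          calc ((mis adj W).card : ℝ) ≤ ((mis adj (W \ {v})).card : ℝ) := by exact_mod_cast h9
            _ ≤ 3 ^ (((W \ {v}).card : ℝ)/3) := i1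
            _ ≤ 3 ^ ((W.card:ℝ)/3) := rpow_div3_le e1
        · push_neg at h0
          by_cases h1 : ∃ v ∈ W, inn adj W v = 1
          · obtain ⟨v, hvW, hv1⟩ := h1
            have h9 := branchK hsym hvW
            have hbuck : ∀ u ∈ nbhdC adj W v,
                ((mis adj (W \ nbhdC adj W u)).card : ℝ) ≤ 3 ^ (((W.card:ℝ) - 2)/3) := by
              intro u hu
              have huW : u ∈ W := nbhdC_subset hvW hu
              have hu1 : 1 ≤ inn adj W u := Nat.one_le_iff_ne_zero.mpr (h0 u huW)
              have hcNu : (nbhdC adj W u).card = inn adj W u + 1 := card_nbhdC hirr W u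
              have hc2 : (W \ nbhdC adj W u).card + (inn adj W u + 1) = W.card := by
                have h := card_sdiff_add_card_eq_card
                  (show nbhdC adj W u ⊆ W from nbhdC_subset huW)
                omega
              have iu := ih (W \ nbhdC adj W u) (by omega)
              refine iu.trans (rpow_div3_le ?_)
              have h4 : (W \ nbhdC adj W u).card + 2 ≤ W.card := by omega
              have : ((W \ nbhdC adj W u).card : ℝ) + 2 ≤ (W.card : ℝ) := by exact_mod_cast h4
              linarith
            have hsum : ((mis adj W).card : ℝ)
                ≤ (nbhdC adj W v).card • ((3:ℝ) ^ (((W.card:ℝ) - 2)/3)) := by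
              calc ((mis adj W).card : ℝ)
                  ≤ ∑ u ∈ nbhdC adj W v, ((mis adj (W \ nbhdC adj W u)).card : ℝ) := by
                    exact_mod_cast h9
                _ ≤ (nbhdC adj W v).card • ((3:ℝ) ^ (((W.card:ℝ) - 2)/3)) :=
                    sum_le_card_nsmul _ _ _ hbuck
            have hcard2 : (nbhdC adj W v).card = 2 := by
              rw [card_nbhdC hirr W v, hv1]
            rw [hcard2] at hsum
            have : ((mis adj W).card : ℝ) ≤ 2 * (3:ℝ) ^ (((W.card:ℝ) - 2)/3) := by
              simpa [nsmul_eq_mul] using hsum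
            refine this.trans ?_
            rw [show ((W.card:ℝ) - 2)/3 = (W.card:ℝ)/3 + (-(2/3)) by ring,
                Real.rpow_add (by norm_num)]
            nlinarith [mm2, htpos.le, htpos]
          · push_neg at h1
            obtain ⟨v, hvW⟩ := nonempty_iff_ne_empty.mpr hWe
            have hall : ∀ u ∈ W, inn adj W u = 2 := by
              intro u hu
              have := hb3 u hu
              have := h0 u hu
              have := h1 u hu
              omega
            have h9 := branchK hsym hvW
            have hbuck : ∀ u ∈ nbhdC adj W v,
                ((mis adj (W \ nbhdC adj W u)).card : ℝ) ≤ 3 ^ (((W.card:ℝ) - 3)/3) := by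
              intro u hu
              have huW : u ∈ W := nbhdC_subset hvW hu
              have hcNu : (nbhdC adj W u).card = inn adj W u + 1 := card_nbhdC hirr W u
              have hc2 : (W \ nbhdC adj W u).card + (inn adj W u + 1) = W.card := by
                have h := card_sdiff_add_card_eq_card
                  (show nbhdC adj W u ⊆ W from nbhdC_subset huW)
                omega
              have hu2 := hall u huW
              have iu := ih (W \ nbhdC adj W u) (by omega)
              refine iu.trans (rpow_div3_le ?_)
              have h4 : (W \ nbhdC adj W u).card + 3 ≤ W.card := by omega
              have : ((W \ nbhdC adj W u).card : ℝ) + 3 ≤ (W.card : ℝ) := by exact_mod_cast h4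
              linarith
            have hsum : ((mis adj W).card : ℝ)
                ≤ (nbhdC adj W v).card • ((3:ℝ) ^ (((W.card:ℝ) - 3)/3)) := by
              calc ((mis adj W).card : ℝ)
                  ≤ ∑ u ∈ nbhdC adj W v, ((mis adj (W \ nbhdC adj W u)).card : ℝ) := by
                    exact_mod_cast h9
                _ ≤ _ := sum_le_card_nsmul _ _ _ hbuck
            have hcard3 : (nbhdC adj W v).card = 3 := by
              rw [card_nbhdC hirr W v, hall v hvW]
            rw [hcard3] at hsum
            have h3' : ((mis adj W).card : ℝ) ≤ 3 * (3:ℝ) ^ (((W.card:ℝ) - 3)/3) := by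
              simpa [nsmul_eq_mul] using hsum
            refine h3'.trans ?_
            rw [show ((W.card:ℝ) - 3)/3 = (W.card:ℝ)/3 + (-(1:ℝ)) by ring,
                Real.rpow_add (by norm_num), rpow3_neg_one]
            nlinarith [htpos.le]


lemma outn_add_inn {Ω W : Finset α} (hWΩ : W ⊆ Ω) (v : α) :
    outn adj Ω W v + inn adj W v = inn adj Ω v := by
  unfold outn inn
  rw [← card_union_of_disjoint (disjoint_filter_filter sdiff_disjoint),
    ← filter_union, sdiff_union_of_subset hWΩ]

lemma phi_drop (hsym : ∀ x y, adj x y → adj y x) {Ω W R : Finset α} {D : ℕ}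
    (hR : R ⊆ W) (hWΩ : W ⊆ Ω) :
    phi adj Ω D (W \ R) ≤ phi adj Ω D W
      - ∑ w ∈ R, (48/100 + (1/(20*(D:ℝ))) * ((outn adj Ω W w : ℝ) - (inn adj W w : ℝ))) := by
  have hout : ∀ v ∈ W \ R,
      outn adj Ω (W \ R) v = outn adj Ω W v + (R.filter (fun u => adj v u)).card := by
    intro v _
    unfold outn
    have hΩ : Ω \ (W \ R) = (Ω \ W) ∪ R := by
      ext x
      simp only [mem_sdiff, mem_union]
      constructor
      · rintro ⟨hxΩ, hx⟩
        by_cases hxR : x ∈ R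
        · exact Or.inr hxR
        · exact Or.inl ⟨hxΩ, fun hxW => hx ⟨hxW, hxR⟩⟩
      · rintro (⟨hxΩ, hxW⟩ | hxR)
        · exact ⟨hxΩ, fun h => hxW h.1⟩
        · exact ⟨hWΩ (hR hxR), fun h => h.2 hxR⟩
    rw [hΩ, filter_union,
      card_union_of_disjoint (disjoint_filter_filter (disjoint_of_subset_right hR sdiff_disjoint))]
  have hphi1 : phi adj Ω D (W \ R)
      = (∑ v ∈ W \ R, (48/100 + (1/(20*(D:ℝ))) * (outn adj Ω W v : ℝ)))
        + (1/(20*(D:ℝ))) * ∑ v ∈ W \ R, ((R.filter (fun u => adj v u)).card : ℝ) := by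
    unfold phi
    rw [mul_sum, ← sum_add_distrib]
    apply sum_congr rfl
    intro v hv
    rw [hout v hv]
    push_cast
    ring
  have hsplit : (∑ v ∈ W \ R, (48/100 + (1/(20*(D:ℝ))) * (outn adj Ω W v : ℝ)))
      + (∑ w ∈ R, (48/100 + (1/(20*(D:ℝ))) * (outn adj Ω W w : ℝ))) = phi adj Ω D W := by
    unfold phi; exact sum_sdiff hR
  have hE : ∑ v ∈ W \ R, ((R.filter (fun u => adj v u)).card : ℝ)
      ≤ ∑ w ∈ R, ((inn adj W w : ℝ)) := by
    have hcomm := sum_filter_card_comm hsym (W \ R) R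
    have hle : ∑ w ∈ R, ((W \ R).filter (fun u => adj w u)).card ≤ ∑ w ∈ R, inn adj W w := by
      apply sum_le_sum
      intro w _
      exact card_le_card (filter_subset_filter _ (sdiff_subset))
    have : ∑ v ∈ W \ R, ((R.filter (fun u => adj v u)).card) ≤ ∑ w ∈ R, inn adj W w := by
      rw [hcomm]; exact hle
    exact_mod_cast this
  have hRlin : ∑ w ∈ R, (48/100 + (1/(20*(D:ℝ))) * ((outn adj Ω W w : ℝ) - (inn adj W w : ℝ)))
      = (∑ w ∈ R, (48/100 + (1/(20*(D:ℝ))) * (outn adj Ω W w : ℝ)))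
        - (1/(20*(D:ℝ))) * ∑ w ∈ R, ((inn adj W w : ℝ)) := by
    rw [mul_sum, ← sum_sub_distrib]
    apply sum_congr rfl
    intros
    ring
  have hε : (0:ℝ) ≤ 1/(20*(D:ℝ)) := by positivity
  have hEε := mul_le_mul_of_nonneg_left hE hε
  rw [hphi1, hRlin]
  linarith

lemma pv_low {Ω W : Finset α} {D : ℕ} {w : α} (hDpos : 0 < D) (hWΩ : W ⊆ Ω)
    (hdegU : ∀ v ∈ Ω, inn adj Ω v ≤ 3*D) (hw : w ∈ W) :
    (33/100 : ℝ) ≤ 48/100 + (1/(20*(D:ℝ))) * ((outn adj Ω W w : ℝ) - (inn adj W w : ℝ)) := by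
  have h1 : inn adj W w ≤ inn adj Ω w := card_le_card (filter_subset_filter _ hWΩ)
  have h2 : inn adj Ω w ≤ 3*D := hdegU w (hWΩ hw)
  have h3 : (inn adj W w : ℝ) ≤ 3*(D:ℝ) := by exact_mod_cast le_trans h1 h2
  have h4 : (0:ℝ) ≤ (outn adj Ω W w : ℝ) := by positivity
  have hDR : (0:ℝ) < (D:ℝ) := by exact_mod_cast hDpos
  have hmono : (1/(20*(D:ℝ))) * (-(3*(D:ℝ)))
      ≤ (1/(20*(D:ℝ))) * ((outn adj Ω W w : ℝ) - (inn adj W w : ℝ)) := by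
    apply mul_le_mul_of_nonneg_left (by linarith) (by positivity)
  have heq : (1/(20*(D:ℝ))) * (-(3*(D:ℝ))) = -(3/20) := by field_simp
  linarith

lemma pv_half {Ω W : Finset α} {D : ℕ} {w : α} (hWΩ : W ⊆ Ω)
    (hdegL : ∀ v ∈ Ω, D ≤ inn adj Ω v) (hw : w ∈ W) (hhalf : 2 * inn adj W w ≤ D) :
    (48/100 : ℝ) ≤ 48/100 + (1/(20*(D:ℝ))) * ((outn adj Ω W w : ℝ) - (inn adj W w : ℝ)) := by
  have hsum := outn_add_inn (adj := adj) hWΩ w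
  have hL := hdegL w (hWΩ hw)
  have h1 : inn adj W w ≤ outn adj Ω W w := by omega
  have h2 : (inn adj W w : ℝ) ≤ (outn adj Ω W w : ℝ) := by exact_mod_cast h1
  have hε : (0:ℝ) ≤ 1/(20*(D:ℝ)) := by positivity
  nlinarith

theorem main_bound (hsym : ∀ x y, adj x y → adj y x) (hirr : ∀ x, ¬ adj x x)
    {Ω : Finset α} {D : ℕ} (hD : 10000 ≤ D)
    (hdegL : ∀ v ∈ Ω, D ≤ inn adj Ω v) (hdegU : ∀ v ∈ Ω, inn adj Ω v ≤ 3*D) :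
    ∀ (m : ℕ) (W : Finset α), W ⊆ Ω → W.card ≤ m →
      ((mis adj W).card : ℝ) ≤ 2 ^ (phi adj Ω D W) := by
  have hDpos : 0 < D := by omega
  intro m
  induction m with
  | zero =>
      intro W _ hW
      have hWe : W = ∅ := card_eq_zero.mp (Nat.le_zero.mp hW)
      subst hWe
      have : phi adj Ω D (∅ : Finset α) = 0 := sum_empty
      rw [this, Real.rpow_zero]
      exact_mod_cast mis_card_empty
  | succ m ih =>
      intro W hWΩ hW
      by_cases hWe : W = ∅
      · subst hWe
        have : phi adj Ω D (∅ : Finset α) = 0 := sum_empty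
        rw [this, Real.rpow_zero]
        exact_mod_cast mis_card_empty
      have hppos : (0:ℝ) < 2 ^ (phi adj Ω D W) := Real.rpow_pos_of_pos (by norm_num) _
      by_cases hbr : ∃ v ∈ W, 5 ≤ inn adj W v
      · obtain ⟨v, hvW, hv5⟩ := hbr
        have hNsub : nbhdC adj W v ⊆ W := nbhdC_subset hvW
        have hcN : (nbhdC adj W v).card = inn adj W v + 1 := card_nbhdC hirr W v
        have hc1 : (W \ {v}).card + 1 = W.card := by
          have h := card_sdiff_add_card_eq_card (singleton_subset_iff.mpr hvW)
          simpa using h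
        have hc2 : (W \ nbhdC adj W v).card + (inn adj W v + 1) = W.card := by
          have h := card_sdiff_add_card_eq_card hNsub
          omega
        have i1 := ih (W \ {v}) ((sdiff_subset).trans hWΩ) (by omega)
        have i2 := ih (W \ nbhdC adj W v) ((sdiff_subset).trans hWΩ) (by omega)
        have dropA := phi_drop hsym (singleton_subset_iff.mpr hvW) hWΩ (D := D)
        rw [sum_singleton] at dropA
        have dropB := phi_drop hsym hNsub hWΩ (D := D)
        have hBsum : ((nbhdC adj W v).card : ℝ) * (33/100)
            ≤ ∑ w ∈ nbhdC adj W v,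
              (48/100 + (1/(20*(D:ℝ))) * ((outn adj Ω W w : ℝ) - (inn adj W w : ℝ))) := by
          have h := card_nsmul_le_sum (nbhdC adj W v) _ _
            (fun w hw => pv_low hDpos hWΩ hdegU (hNsub hw))
          simpa [nsmul_eq_mul] using h
        by_cases hhalf : 2 * inn adj W v ≤ D
        · -- moderate degree branch
          have hA : phi adj Ω D (W \ {v}) ≤ phi adj Ω D W - 48/100 := by
            have := pv_half hWΩ hdegL hvW hhalf
            linarith
          have hB : phi adj Ω D (W \ nbhdC adj W v) ≤ phi adj Ω D W - 198/100 := by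
            have h6 : (6:ℝ) ≤ ((nbhdC adj W v).card : ℝ) := by
              have : 6 ≤ (nbhdC adj W v).card := by omega
              exact_mod_cast this
            nlinarith
          calc ((mis adj W).card : ℝ)
              ≤ ((mis adj (W \ {v})).card : ℝ) + ((mis adj (W \ nbhdC adj W v)).card : ℝ) := by
                exact_mod_cast branch2 hsym hvW
            _ ≤ 2 ^ (phi adj Ω D W - 48/100) + 2 ^ (phi adj Ω D W - 198/100) := by
                apply add_le_add
                · exact i1.trans (Real.rpow_le_rpow_of_exponent_le (by norm_num) hA)
                · exact i2.trans (Real.rpow_le_rpow_of_exponent_le (by norm_num) hB)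
            _ ≤ 2 ^ (phi adj Ω D W) := by
                rw [show phi adj Ω D W - 48/100 = phi adj Ω D W + (-(48/100)) by ring,
                    show phi adj Ω D W - 198/100 = phi adj Ω D W + (-(198/100)) by ring,
                    Real.rpow_add (by norm_num), Real.rpow_add (by norm_num), ← mul_add]
                nlinarith [num1, num2, hppos.le]
        · -- high degree branch
          push_neg at hhalf
          have hA : phi adj Ω D (W \ {v}) ≤ phi adj Ω D W - 33/100 := by
            have := pv_low hDpos hWΩ hdegU hvW
            linarith
          have hB : phi adj Ω D (W \ nbhdC adj W v) ≤ phi adj Ω D W - 4 := by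
            have h5002 : (5002:ℝ) ≤ ((nbhdC adj W v).card : ℝ) := by
              have : 5002 ≤ (nbhdC adj W v).card := by omega
              exact_mod_cast this
            nlinarith
          calc ((mis adj W).card : ℝ)
              ≤ ((mis adj (W \ {v})).card : ℝ) + ((mis adj (W \ nbhdC adj W v)).card : ℝ) := by
                exact_mod_cast branch2 hsym hvW
            _ ≤ 2 ^ (phi adj Ω D W - 33/100) + 2 ^ (phi adj Ω D W - 4) := by
                apply add_le_add
                · exact i1.trans (Real.rpow_le_rpow_of_exponent_le (by norm_num) hA)
                · exact i2.trans (Real.rpow_le_rpow_of_exponent_le (by norm_num) hB)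
            _ ≤ 2 ^ (phi adj Ω D W) := by
                rw [show phi adj Ω D W - 33/100 = phi adj Ω D W + (-(33/100)) by ring,
                    show phi adj Ω D W - 4 = phi adj Ω D W + (-(4:ℝ)) by ring,
                    Real.rpow_add (by norm_num), Real.rpow_add (by norm_num), ← mul_add]
                nlinarith [num3, num4, hppos.le]
      · -- low degree: Moon-Moser
        push_neg at hbr
        have hmm := moon_moser hsym hirr W.card W le_rfl
        have hperv : ∀ v ∈ W,
            (529/1000 : ℝ) ≤ 48/100 + (1/(20*(D:ℝ))) * (outn adj Ω W v : ℝ) := by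
          intro v hv
          have hsum := outn_add_inn (adj := adj) hWΩ v
          have hL := hdegL v (hWΩ hv)
          have hi4 : inn adj W v ≤ 4 := by
            have := hbr v hv
            omega
          have hout : D ≤ outn adj Ω W v + 4 := by omega
          have houtR : ((D:ℝ) - 4) ≤ (outn adj Ω W v : ℝ) := by
            have : (D:ℝ) ≤ (outn adj Ω W v : ℝ) + 4 := by exact_mod_cast hout
            linarith
          have hDR : (10000:ℝ) ≤ (D:ℝ) := by exact_mod_cast hD
          have hkey : (49/1000 : ℝ) ≤ (1/(20*(D:ℝ))) * ((D:ℝ) - 4) := by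
            rw [div_mul_eq_mul_div, one_mul, le_div_iff₀ (by positivity)]
            nlinarith
          have hmono : (1/(20*(D:ℝ))) * ((D:ℝ) - 4)
              ≤ (1/(20*(D:ℝ))) * (outn adj Ω W v : ℝ) :=
            mul_le_mul_of_nonneg_left houtR (by positivity)
          linarith
        have hphiW : (529/1000 : ℝ) * (W.card:ℝ) ≤ phi adj Ω D W := by
          have h := card_nsmul_le_sum W _ _ hperv
          unfold phi
          simpa [nsmul_eq_mul, mul_comm] using h
        have hmid : (3:ℝ) ^ ((W.card : ℝ)/3) ≤ 2 ^ ((529/1000 : ℝ) * (W.card:ℝ)) := by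
          rw [show (W.card:ℝ)/3 = (1/3)*(W.card:ℝ) by ring,
            Real.rpow_mul (by norm_num : (0:ℝ) ≤ 3),
            Real.rpow_mul (by norm_num : (0:ℝ) ≤ 2)]
          apply Real.rpow_le_rpow (by positivity) numbase (by positivity)
        exact hmm.trans (hmid.trans (Real.rpow_le_rpow_of_exponent_le (by norm_num) hphiW))


end MISCount

open MISCount Finset

/-- If `B` is the nontrivial coset of an index-2 subgroup of a large finite abelian
group `G` of order `n` and `S ⊆ H` is sum-free with `|S| ≥ 10⁴`, then the link graph
`L_S[B]` has at most `2 ^ (0.24 n)` maximal independent sets. -/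
theorem mis_of_link_graph_of_large_generating_set :
    ∃ n₀ : ℕ, ∀ (G : Type) [AddCommGroup G] [Fintype G],
      Fintype.card G ≥ n₀ →
      ∀ (H : AddSubgroup G), H.index = 2 →
      ∀ (B : Set G), B = (H : Set G)ᶜ →
      ∀ (S : Set G), S ⊆ (H : Set G) → IsSumFree S → S.ncard ≥ 10 ^ 4 →
      (linkMIS S B : ℝ) ≤ 2 ^ ((0.24 : ℝ) * Fintype.card G) := by
  classical
  refine ⟨0, ?_⟩
  intro G _ _ _ H hHidx B hB S hSH hSF hScard
  set n := Fintype.card G with hn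
  set adj : G → G → Prop := fun x y => x ≠ y ∧ (x + y ∈ S ∨ x - y ∈ S ∪ -S) with hadj
  have hsym : ∀ x y, adj x y → adj y x := by
    rintro x y ⟨hne, hor⟩
    refine ⟨hne.symm, ?_⟩
    rcases hor with h | h
    · exact Or.inl (by rwa [add_comm])
    · rcases h with h | h
      · exact Or.inr (Or.inr (by
          rw [show y - x = -(x - y) by abel]
          exact Set.neg_mem_neg.mpr h))
      · exact Or.inr (Or.inl (by
          rw [show y - x = -(x - y) by abel]
          exact Set.mem_neg.mp h))
  have hirr : ∀ x, ¬ adj x x := by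
    rintro x ⟨hne, _⟩
    exact hne rfl
  have h0S : (0:G) ∉ S := fun h0 => hSF 0 h0 0 h0 (by simpa using h0)
  have hBfin : B.Finite := B.toFinite
  have hSfin : S.Finite := S.toFinite
  set Ω : Finset G := hBfin.toFinset with hΩdef
  set Sf : Finset G := hSfin.toFinset with hSfdef
  set D : ℕ := Sf.card with hDdef
  have hDS : D = S.ncard := (Set.ncard_eq_toFinset_card S hSfin).symm
  have hD4 : 10000 ≤ D := by
    rw [hDS]
    calc 10000 = 10 ^ 4 := by norm_num
      _ ≤ S.ncard := hScard
  have hmemΩ : ∀ x : G, x ∈ Ω ↔ x ∈ B := fun x => Set.Finite.mem_toFinset hBfin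
  have hmemS : ∀ x : G, x ∈ Sf ↔ x ∈ S := fun x => Set.Finite.mem_toFinset hSfin
  have hBH : ∀ x ∈ B, x ∉ (H : Set G) := by
    intro x hx
    rw [hB] at hx
    exact hx
  -- membership facts about the coset B
  have hBadd : ∀ x ∈ B, ∀ s ∈ S, x + s ∈ B := by
    intro x hx s hs
    rw [hB]
    intro hmem
    exact hBH x hx (by simpa using sub_mem hmem (hSH hs))
  have hBsub : ∀ x ∈ B, ∀ s ∈ S, x - s ∈ B := by
    intro x hx s hs
    rw [hB]
    intro hmem
    exact hBH x hx (by simpa using add_mem hmem (hSH hs))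
  have hBneg : ∀ x ∈ B, ∀ s ∈ S, s - x ∈ B := by
    intro x hx s hs
    rw [hB]
    intro hmem
    have : -x ∈ (H : Set G) := by simpa using sub_mem hmem (hSH hs)
    exact hBH x hx (by simpa using neg_mem this)
  have hinn_eq : ∀ (W : Finset G) (v : G),
      inn adj W v = (W.filter (fun u => adj v u)).card := by
    intro W v
    unfold inn
    congr!
  -- degree bounds
  have hdegL : ∀ v ∈ Ω, D ≤ inn adj Ω v := by
    intro v hv
    rw [hinn_eq]
    have hvB : v ∈ B := (hmemΩ v).mp hv
    have himg : Sf.image (fun s => v + s) ⊆ Ω.filter (fun u => adj v u) := by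
      intro y hy
      obtain ⟨s, hsSf, rfl⟩ := mem_image.mp hy
      have hsS : s ∈ S := (hmemS s).mp hsSf
      refine mem_filter.mpr ⟨(hmemΩ _).mpr (hBadd v hvB s hsS), ?_, ?_⟩
      · intro heq
        have : s = 0 := by
          have := heq.symm
          rwa [add_eq_left] at this
        exact h0S (this ▸ hsS)
      · refine Or.inr (Or.inr ?_)
        rw [show v - (v + s) = -s by abel]
        exact Set.neg_mem_neg.mpr hsS
    have hcard : (Sf.image (fun s => v + s)).card = D := by
      rw [card_image_of_injective _ (add_right_injective v)]
    calc D = (Sf.image (fun s => v + s)).card := hcard.symm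
      _ ≤ (Ω.filter (fun u => adj v u)).card := card_le_card himg
  have hdegU : ∀ v ∈ Ω, inn adj Ω v ≤ 3*D := by
    intro v _
    rw [hinn_eq]
    have hsub : Ω.filter (fun u => adj v u) ⊆
        (Sf.image (fun s => v + s) ∪ Sf.image (fun s => v - s)) ∪
          Sf.image (fun s => s - v) := by
      intro y hy
      obtain ⟨_, hne, hor⟩ := mem_filter.mp hy
      rcases hor with h | h
      · refine mem_union.mpr (Or.inr ?_)
        exact mem_image.mpr ⟨v + y, (hmemS _).mpr h, by abel⟩
      · rcases h with h | h
        · refine mem_union.mpr (Or.inl (mem_union.mpr (Or.inr ?_)))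
          exact mem_image.mpr ⟨v - y, (hmemS _).mpr h, by abel⟩
        · refine mem_union.mpr (Or.inl (mem_union.mpr (Or.inl ?_)))
          have : -(v - y) ∈ S := Set.mem_neg.mp h
          exact mem_image.mpr ⟨-(v - y), (hmemS _).mpr this, by abel⟩
    calc (Ω.filter (fun u => adj v u)).card ≤ _ := card_le_card hsub
      _ ≤ (Sf.image (fun s => v + s) ∪ Sf.image (fun s => v - s)).card
            + (Sf.image (fun s => s - v)).card := card_union_le _ _
      _ ≤ ((Sf.image (fun s => v + s)).card + (Sf.image (fun s => v - s)).card)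
            + (Sf.image (fun s => s - v)).card := by
          have := card_union_le (Sf.image (fun s => v + s)) (Sf.image (fun s => v - s))
          omega
      _ ≤ 3 * D := by
          have h1 := card_image_le (s := Sf) (f := fun s => v + s)
          have h2 := card_image_le (s := Sf) (f := fun s => v - s)
          have h3 := card_image_le (s := Sf) (f := fun s => s - v)
          omega
  -- the unlooped vertex set
  set W₀ : Finset G := Ω.filter (fun x => x + x ∉ S) with hW₀def
  have hW₀Ω : W₀ ⊆ Ω := filter_subset _ _
  -- (S+S) ∪ (S-S) lies in H
  have hHmem : ∀ x ∈ (S + S) ∪ (S - S), x ∈ (H : Set G) := by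
    intro x hx
    rcases hx with hx | hx
    · obtain ⟨a, ha, b, hb, rfl⟩ := Set.mem_add.mp hx
      exact add_mem (hSH ha) (hSH hb)
    · obtain ⟨a, ha, b, hb, rfl⟩ := Set.mem_sub.mp hx
      exact sub_mem (hSH ha) (hSH hb)
  -- injection from maximal link-independent sets into mis adj W₀
  have hinj : linkMIS S B ≤ (mis adj W₀).card := by
    have key : ∀ (I : Set G), LinkIndep S B I →
        (∀ J : Set G, LinkIndep S B J → I ⊆ J → I = J) →
        (I.toFinite.toFinset ∈ mis adj W₀) := by
      intro I hLI hImax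
      rw [mem_mis]
      obtain ⟨hIB, hIloop, hIpair⟩ := hLI
      refine ⟨?_, ?_, ?_⟩
      · intro x hx
        rw [Set.Finite.mem_toFinset] at hx
        refine mem_filter.mpr ⟨(hmemΩ x).mpr (hIB hx), ?_⟩
        intro hxx
        exact hIloop x hx (Or.inl hxx)
      · intro x hx y hy hne hadjxy
        rw [Set.Finite.mem_toFinset] at hx hy
        exact hIpair x hx y hy hne hadjxy.2
      · intro J hJW₀ hJInd hIJ
        have hLJ : LinkIndep S B (↑J : Set G) := by
          refine ⟨?_, ?_, ?_⟩
          · intro x hx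
            have := hJW₀ (by exact_mod_cast hx)
            exact (hmemΩ x).mp (mem_filter.mp this).1
          · intro x hx
            have hxJ : x ∈ J := by exact_mod_cast hx
            have hxW₀ := hJW₀ hxJ
            rintro (hxx | hxu)
            · exact (mem_filter.mp hxW₀).2 hxx
            · exact hBH x ((hmemΩ x).mp (mem_filter.mp hxW₀).1) (hHmem x hxu)
          · intro x hx y hy hne hor
            have hxJ : x ∈ J := by exact_mod_cast hx
            have hyJ : y ∈ J := by exact_mod_cast hy
            exact hJInd x hxJ y hyJ hne ⟨hne, hor⟩
        have hIsubJ : I ⊆ (↑J : Set G) := by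
          intro x hx
          have : x ∈ I.toFinite.toFinset := (Set.Finite.mem_toFinset _).mpr hx
          exact_mod_cast hIJ this
        have hEq := hImax (↑J) hLJ hIsubJ
        ext x
        rw [Set.Finite.mem_toFinset, hEq]
        exact Finset.mem_coe
    let F : {I : Set G // LinkIndep S B I ∧
        ∀ J : Set G, LinkIndep S B J → I ⊆ J → I = J} →
        {J : Finset G // J ∈ mis adj W₀} :=
      fun p => ⟨p.1.toFinite.toFinset, key p.1 p.2.1 p.2.2⟩
    have hFinj : Function.Injective F := by
      intro p q hpq
      apply Subtype.ext
      have h1 : (p.1.toFinite.toFinset : Set G) = (q.1.toFinite.toFinset : Set G) := by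
        rw [Subtype.ext_iff] at hpq
        exact congrArg (fun J : Finset G => (J : Set G)) hpq
      rwa [Set.Finite.coe_toFinset, Set.Finite.coe_toFinset] at h1
    calc linkMIS S B ≤ Nat.card {J : Finset G // J ∈ mis adj W₀} :=
          Nat.card_le_card_of_injective F hFinj
      _ = (mis adj W₀).card := Nat.card_eq_finsetCard _
  -- bound on phi
  have hphile : phi adj Ω D W₀ ≤ (48/100) * (Ω.card : ℝ) := by
    have hsum_out : ∑ v ∈ W₀, outn adj Ω W₀ v ≤ (Ω \ W₀).card * (3*D) := by
      rw [sum_outn_comm hsym Ω W₀]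
      calc ∑ y ∈ Ω \ W₀, inn adj W₀ y
          ≤ ∑ y ∈ Ω \ W₀, (3*D) := by
            apply sum_le_sum
            intro y hy
            have hyΩ : y ∈ Ω := (mem_sdiff.mp hy).1
            exact le_trans (inn_mono hW₀Ω y) (hdegU y hyΩ)
        _ = (Ω \ W₀).card * (3*D) := by rw [sum_const, smul_eq_mul]
    have hDpos : (0:ℝ) < (D:ℝ) := by
      have : 0 < D := by omega
      exact_mod_cast this
    have hsoutR : (∑ v ∈ W₀, (outn adj Ω W₀ v : ℝ)) ≤ ((Ω \ W₀).card : ℝ) * (3*(D:ℝ)) := by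
      have := hsum_out
      push_cast
      exact_mod_cast this
    have hcards : (Ω \ W₀).card + W₀.card = Ω.card := card_sdiff_add_card_eq_card hW₀Ω
    have hcardsR : ((Ω \ W₀).card : ℝ) + (W₀.card : ℝ) = (Ω.card : ℝ) := by
      exact_mod_cast hcards
    have hphi1 : phi adj Ω D W₀
        = (W₀.card : ℝ) * (48/100) + (1/(20*(D:ℝ))) * ∑ v ∈ W₀, (outn adj Ω W₀ v : ℝ) := by
      unfold phi
      rw [sum_add_distrib, sum_const, nsmul_eq_mul, Finset.mul_sum]
    have hεsum : (1/(20*(D:ℝ))) * (((Ω \ W₀).card : ℝ) * (3*(D:ℝ)))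
        = (3/20) * ((Ω \ W₀).card : ℝ) := by
      field_simp
    have hε : (0:ℝ) ≤ 1/(20*(D:ℝ)) := by positivity
    have h2 := mul_le_mul_of_nonneg_left hsoutR hε
    rw [hphi1]
    nlinarith [h2, hεsum]
  -- group cardinalities
  have hHcard : Nat.card H * 2 = n := by
    have h := H.card_mul_index
    rw [hHidx] at h
    rw [hn, ← Nat.card_eq_fintype_card]
    exact h
  have hΩcard : 2 * Ω.card = n := by
    have h1 : Ω.card = B.ncard := (Set.ncard_eq_toFinset_card B hBfin).symm
    have h2 : (↑H : Set G).ncard + B.ncard = n := by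
      rw [hB]
      rw [hn, ← Nat.card_eq_fintype_card]
      exact Set.ncard_add_ncard_compl _
    have h3 : (↑H : Set G).ncard = Nat.card H := by
      rw [← Nat.card_coe_set_eq]
      rfl
    omega
  have hexp : phi adj Ω D W₀ ≤ (0.24:ℝ) * n := by
    have hΩR : 2 * (Ω.card : ℝ) = (n:ℝ) := by exact_mod_cast hΩcard
    have heq : (0.24:ℝ) * n = (48/100) * (Ω.card : ℝ) := by
      rw [← hΩR]
      norm_num
      ring
    linarith
  have hmb := main_bound hsym hirr hD4 hdegL hdegU W₀.card W₀ hW₀Ω le_rfl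
  calc (linkMIS S B : ℝ) ≤ ((mis adj W₀).card : ℝ) := by exact_mod_cast hinj
    _ ≤ 2 ^ (phi adj Ω D W₀) := hmb
    _ ≤ 2 ^ ((0.24:ℝ) * n) := Real.rpow_le_rpow_of_exponent_le (by norm_num) hexp
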